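/- Suppose Qb² ≥ ρσ² (so scheme 2 is feasible). Then (√P·a + √Q·b)² ≥ ρσ² (so scheme 4 is feasible), and γ*₁,S4 ≥ γ*₁,S2, where γ*₁,S2 = Qb²/(ρσ²) − 1 if Qb²/(σ² + Pa²) ≤ ρ and γ*₁,S2 = Pa²/σ² otherwise, and γ*₁,S4 = Pa²/σ² if Qb²/(σ² + Pa²) ≥ ρ and γ*₁,S4 = a²(P − v₂*²)/σ² with v₂* = (√(Pρ(1+ρ)a² + ρ(1+ρ)σ² − ρQb²) − √Q·b)/(a(1+ρ)) otherwise. -/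

import Mathlib

set_option maxHeartbeats 1000000


/-- If scheme 2 is feasible then scheme 4 is feasible, and the proposed
cooperative NOMA scheme 4 achieves an SINR at least that of scheme 2. -/
theorem stmt_14 (a b P Q σ2 ρ : ℝ) (ha : 0 < a) (hb : 0 < b) (hP : 0 < P)
    (hQ : 0 < Q) (hσ : 0 < σ2) (hρ : 0 < ρ)
    (hfeas2 : Q * b ^ 2 ≥ ρ * σ2)
    (γS2 γS4 v2star : ℝ)
    (hγ2 : γS2 = if Q * b ^ 2 / (σ2 + P * a ^ 2) ≤ ρ
      then Q * b ^ 2 / (ρ * σ2) - 1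
      else P * a ^ 2 / σ2)
    (hv2 : v2star =
      (Real.sqrt (P * ρ * (1 + ρ) * a ^ 2 + ρ * (1 + ρ) * σ2 - ρ * Q * b ^ 2) -
        Real.sqrt Q * b) / (a * (1 + ρ)))
    (hγ4 : γS4 = if Q * b ^ 2 / (σ2 + P * a ^ 2) ≥ ρ
      then P * a ^ 2 / σ2
      else a ^ 2 * (P - v2star ^ 2) / σ2) :
    (Real.sqrt P * a + Real.sqrt Q * b) ^ 2 ≥ ρ * σ2 ∧ γS4 ≥ γS2 := by
  have hq : Real.sqrt Q ^ 2 = Q := Real.sq_sqrt hQ.le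
  have hp : Real.sqrt P ^ 2 = P := Real.sq_sqrt hP.le
  have hqpos : 0 < Real.sqrt Q := Real.sqrt_pos.mpr hQ
  have hppos : 0 < Real.sqrt P := Real.sqrt_pos.mpr hP
  constructor
  · nlinarith [mul_pos hppos ha, mul_pos hqpos hb,
      mul_pos (mul_pos hppos ha) (mul_pos hqpos hb)]
  · have hden : 0 < σ2 + P * a ^ 2 := by positivity
    have hρσ : 0 < ρ * σ2 := by positivity
    rcases le_or_gt (Q * b ^ 2 / (σ2 + P * a ^ 2)) ρ with h1 | h1
    · rw [hγ2, if_pos h1]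
      have h1' : Q * b ^ 2 ≤ ρ * (σ2 + P * a ^ 2) := by
        rwa [div_le_iff₀ hden] at h1
      rcases le_or_gt ρ (Q * b ^ 2 / (σ2 + P * a ^ 2)) with h2 | h2
      · -- equality case: γS4 = P a²/σ²
        rw [hγ4, if_pos h2]
        have h2' : ρ * (σ2 + P * a ^ 2) ≤ Q * b ^ 2 := by
          rwa [le_div_iff₀ hden] at h2
        have heq : Q * b ^ 2 = ρ * (σ2 + P * a ^ 2) := le_antisymm h1' h2'
        rw [heq, ge_iff_le, div_sub_one hρσ.ne', div_le_div_iff₀ hρσ hσ]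
        nlinarith [sq_nonneg a]
      · rw [hγ4, if_neg (not_le.mpr h2)]
        set D := P * ρ * (1 + ρ) * a ^ 2 + ρ * (1 + ρ) * σ2 - ρ * Q * b ^ 2 with hD
        clear_value D
        have hX : 0 < ρ * (σ2 + P * a ^ 2) - Q * b ^ 2 := by
          have := (div_lt_iff₀ hden).mp h2; linarith
        have hDnn : 0 ≤ D := by nlinarith
        have hs : Real.sqrt D ^ 2 = D := Real.sq_sqrt hDnn
        have hsnn : 0 ≤ Real.sqrt D := Real.sqrt_nonneg D
        have hDQ : Q * b ^ 2 ≤ D := by nlinarith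
        have hqb : (Real.sqrt Q * b) ^ 2 = Q * b ^ 2 := by
          rw [mul_pow, hq]
        have hsge : Real.sqrt Q * b ≤ Real.sqrt D := by
          have h := Real.sqrt_le_sqrt hDQ
          rwa [Real.sqrt_mul hQ.le, Real.sqrt_sq hb.le] at h
        have hst : Q * b ^ 2 ≤ Real.sqrt D * (Real.sqrt Q * b) := by
          calc Q * b ^ 2 = (Real.sqrt Q * b) * (Real.sqrt Q * b) := by
                rw [← hqb]; ring
            _ ≤ Real.sqrt D * (Real.sqrt Q * b) :=
                mul_le_mul_of_nonneg_right hsge (mul_pos hqpos hb).le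
        have h1ρ : (0:ℝ) < 1 + ρ := by linarith
        -- u = a² v2star²
        set s := Real.sqrt D with hsdef
        clear_value s
        set u := (s - Real.sqrt Q * b) ^ 2 / (1 + ρ) ^ 2 with hu_def
        clear_value u
        have hu : u * (1 + ρ) ^ 2 = (s - Real.sqrt Q * b) ^ 2 := by
          rw [hu_def]; exact div_mul_cancel₀ _ (by positivity)
        have hav2 : a ^ 2 * v2star ^ 2 = u := by
          rw [hv2, div_pow, hu_def]
          field_simp
        have hρu : ρ * u * (1 + ρ) ^ 2 ≤
            (ρ * (σ2 + P * a ^ 2) - Q * b ^ 2) * (1 + ρ) ^ 2 := by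
          nlinarith [hu, hs, hqb, hst, hρ.le, hX.le,
            mul_nonneg hρ.le (sub_nonneg.mpr hst),
            mul_nonneg (mul_nonneg hρ.le h1ρ.le) hX.le,
            mul_nonneg h1ρ.le hX.le]
        have hρu' : ρ * u ≤ ρ * (σ2 + P * a ^ 2) - Q * b ^ 2 :=
          le_of_mul_le_mul_right hρu (by positivity)
        have hkey : Q * b ^ 2 ≤ ρ * (a ^ 2 * (P - v2star ^ 2)) + ρ * σ2 := by
          have : a ^ 2 * (P - v2star ^ 2) = P * a ^ 2 - u := by
            rw [mul_sub, hav2]; ring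
          rw [this]; linarith [hρu']
        rw [ge_iff_le, div_sub_one hρσ.ne', div_le_div_iff₀ hρσ hσ]
        nlinarith [hkey, hσ.le]
    · rw [hγ2, if_neg (not_le.mpr h1), hγ4, if_pos h1.le]
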